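/- Block Gershgorin theorem: Let A ∈ ℝ^{N×N} be partitioned into blocks A_{ij} ∈ ℝ^{k_i×k_j} with Σ k_i = N. Then for every eigenvalue λ of A there exists an index i such that either λ is an eigenvalue of A_{ii}, or ‖(λI - A_{ii})^{-1}‖₂^{-1} ≤ Σ_{j≠i} ‖A_{ij}‖₂. -/

import Mathlib

open Matrix Finset

/-- Spectral norm (maximal singular value) of a complex matrix. -/
noncomputable def specNorm {p q : ℕ} (M : Matrix (Fin p) (Fin q) ℂ) : ℝ :=
  ‖LinearMap.toContinuousLinearMap (Matrix.toEuclideanLin M)‖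

/-- Spectral norm (maximal singular value) of a real matrix. -/
noncomputable def specNormR {p q : ℕ} (M : Matrix (Fin p) (Fin q) ℝ) : ℝ :=
  ‖LinearMap.toContinuousLinearMap (Matrix.toEuclideanLin M)‖

/-- The `(i, j)` block of an `α`-partitioned matrix. -/
def blk {n : ℕ} {k : Fin n → ℕ} {R : Type*}
    (A : Matrix ((i : Fin n) × Fin (k i)) ((i : Fin n) × Fin (k i)) R)
    (i j : Fin n) : Matrix (Fin (k i)) (Fin (k j)) R :=
  Matrix.of fun a b => A ⟨i, a⟩ ⟨j, b⟩


lemma norm_mulVec_leR {p q : ℕ} (M : Matrix (Fin p) (Fin q) ℝ) (w : Fin q → ℝ) :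
    ‖(WithLp.equiv 2 (Fin p → ℝ)).symm (M *ᵥ w)‖
      ≤ specNormR M * ‖(WithLp.equiv 2 (Fin q → ℝ)).symm w‖ := by
  have := (LinearMap.toContinuousLinearMap (Matrix.toEuclideanLin M)).le_opNorm
    ((WithLp.equiv 2 (Fin q → ℝ)).symm w)
  simpa [specNormR, Matrix.toEuclideanLin_apply] using this

lemma specNormR_nonneg {p q : ℕ} (M : Matrix (Fin p) (Fin q) ℝ) : 0 ≤ specNormR M :=
  norm_nonneg _

lemma mulVec_map_re {p q : ℕ} (M : Matrix (Fin p) (Fin q) ℝ) (w : Fin q → ℂ) (a : Fin p) :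
    ((M.map (algebraMap ℝ ℂ) *ᵥ w) a).re = (M *ᵥ fun b => (w b).re) a := by
  simp [Matrix.mulVec, dotProduct, Complex.re_sum]

lemma mulVec_map_im {p q : ℕ} (M : Matrix (Fin p) (Fin q) ℝ) (w : Fin q → ℂ) (a : Fin p) :
    ((M.map (algebraMap ℝ ℂ) *ᵥ w) a).im = (M *ᵥ fun b => (w b).im) a := by
  simp [Matrix.mulVec, dotProduct, Complex.im_sum]

lemma norm_sq_split {p : ℕ} (v : Fin p → ℂ) :
    ‖(WithLp.equiv 2 (Fin p → ℂ)).symm v‖ ^ 2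
      = ‖(WithLp.equiv 2 (Fin p → ℝ)).symm (fun a => (v a).re)‖ ^ 2
      + ‖(WithLp.equiv 2 (Fin p → ℝ)).symm (fun a => (v a).im)‖ ^ 2 := by
  simp only [EuclideanSpace.norm_eq]
  rw [Real.sq_sqrt (by positivity), Real.sq_sqrt (by positivity), Real.sq_sqrt (by positivity)]
  rw [← Finset.sum_add_distrib]
  congr 1
  ext a
  simp [Complex.sq_norm, Complex.normSq_apply, Real.norm_eq_abs, sq_abs]
  ring

lemma specNorm_map_le {p q : ℕ} (M : Matrix (Fin p) (Fin q) ℝ) :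
    specNorm (M.map (algebraMap ℝ ℂ)) ≤ specNormR M := by
  apply ContinuousLinearMap.opNorm_le_bound _ (specNormR_nonneg M)
  intro w
  rw [LinearMap.coe_toContinuousLinearMap' (Matrix.toEuclideanLin (M.map (algebraMap ℝ ℂ)))]
  rw [Matrix.toEuclideanLin_apply]
  set v := M.map (algebraMap ℝ ℂ) *ᵥ (WithLp.equiv 2 (Fin q → ℂ)) w with hv
  have h1 : ‖(WithLp.equiv 2 (Fin p → ℂ)).symm v‖ ^ 2
      ≤ (specNormR M * ‖w‖) ^ 2 := by
    rw [norm_sq_split]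
    have hre : (fun a => (v a).re) = M *ᵥ fun b => ((WithLp.equiv 2 (Fin q → ℂ)) w b).re := by
      funext a; exact mulVec_map_re M _ a
    have him : (fun a => (v a).im) = M *ᵥ fun b => ((WithLp.equiv 2 (Fin q → ℂ)) w b).im := by
      funext a; exact mulVec_map_im M _ a
    rw [hre, him]
    have hr := norm_mulVec_leR M (fun b => ((WithLp.equiv 2 (Fin q → ℂ)) w b).re)
    have hi := norm_mulVec_leR M (fun b => ((WithLp.equiv 2 (Fin q → ℂ)) w b).im)
    have h2 : ‖(WithLp.equiv 2 (Fin q → ℝ)).symm (fun b => ((WithLp.equiv 2 (Fin q → ℂ)) w b).re)‖ ^ 2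
        + ‖(WithLp.equiv 2 (Fin q → ℝ)).symm (fun b => ((WithLp.equiv 2 (Fin q → ℂ)) w b).im)‖ ^ 2
        = ‖w‖ ^ 2 := (norm_sq_split ((WithLp.equiv 2 (Fin q → ℂ)) w)).symm
    calc ‖(WithLp.equiv 2 (Fin p → ℝ)).symm (M *ᵥ fun b => ((WithLp.equiv 2 (Fin q → ℂ)) w b).re)‖ ^ 2
        + ‖(WithLp.equiv 2 (Fin p → ℝ)).symm (M *ᵥ fun b => ((WithLp.equiv 2 (Fin q → ℂ)) w b).im)‖ ^ 2
        ≤ (specNormR M * ‖(WithLp.equiv 2 (Fin q → ℝ)).symm (fun b => ((WithLp.equiv 2 (Fin q → ℂ)) w b).re)‖) ^ 2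
          + (specNormR M * ‖(WithLp.equiv 2 (Fin q → ℝ)).symm (fun b => ((WithLp.equiv 2 (Fin q → ℂ)) w b).im)‖) ^ 2 := by
          exact add_le_add (pow_le_pow_left₀ (norm_nonneg _) hr 2)
            (pow_le_pow_left₀ (norm_nonneg _) hi 2)
      _ = specNormR M ^ 2 * (‖(WithLp.equiv 2 (Fin q → ℝ)).symm (fun b => ((WithLp.equiv 2 (Fin q → ℂ)) w b).re)‖ ^ 2
          + ‖(WithLp.equiv 2 (Fin q → ℝ)).symm (fun b => ((WithLp.equiv 2 (Fin q → ℂ)) w b).im)‖ ^ 2) := by ring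
      _ = (specNormR M * ‖w‖) ^ 2 := by rw [h2]; ring
  exact le_of_pow_le_pow_left₀ two_ne_zero (mul_nonneg (specNormR_nonneg M) (norm_nonneg w)) h1

lemma norm_mulVec_le {p q : ℕ} (M : Matrix (Fin p) (Fin q) ℂ) (w : Fin q → ℂ) :
    ‖(WithLp.equiv 2 (Fin p → ℂ)).symm (M *ᵥ w)‖
      ≤ specNorm M * ‖(WithLp.equiv 2 (Fin q → ℂ)).symm w‖ := by
  have := (LinearMap.toContinuousLinearMap (Matrix.toEuclideanLin M)).le_opNorm
    ((WithLp.equiv 2 (Fin q → ℂ)).symm w)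
  simpa [specNorm, Matrix.toEuclideanLin_apply] using this


theorem block_gershgorin {n : ℕ} (k : Fin n → ℕ)
    (A : Matrix ((i : Fin n) × Fin (k i)) ((i : Fin n) × Fin (k i)) ℝ)
    (lam : ℂ) (hlam : lam ∈ spectrum ℂ (A.map (algebraMap ℝ ℂ))) :
    ∃ i : Fin n,
      lam ∈ spectrum ℂ ((blk A i i).map (algebraMap ℝ ℂ)) ∨
      (specNorm ((lam • (1 : Matrix (Fin (k i)) (Fin (k i)) ℂ)
          - (blk A i i).map (algebraMap ℝ ℂ))⁻¹))⁻¹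
        ≤ ∑ j ∈ Finset.univ.erase i, specNormR (blk A i j) := by
  classical
  have hne : ¬ IsUnit (lam • (1 : Matrix ((i : Fin n) × Fin (k i)) ((i : Fin n) × Fin (k i)) ℂ)
      - A.map (algebraMap ℝ ℂ)) := by
    rw [spectrum.mem_iff, Algebra.algebraMap_eq_smul_one] at hlam
    exact hlam
  have hdet : (lam • (1 : Matrix ((i : Fin n) × Fin (k i)) ((i : Fin n) × Fin (k i)) ℂ)
      - A.map (algebraMap ℝ ℂ)).det = 0 := by
    by_contra h
    exact hne ((Matrix.isUnit_iff_isUnit_det _).2 (isUnit_iff_ne_zero.2 h))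
  obtain ⟨v, hv0, hv⟩ := (Matrix.exists_mulVec_eq_zero_iff).2 hdet
  set x : (j : Fin n) → Fin (k j) → ℂ := fun j b => v ⟨j, b⟩ with hx
  set f : Fin n → ℝ := fun j => ‖(WithLp.equiv 2 (Fin (k j) → ℂ)).symm (x j)‖ with hf
  obtain ⟨p, hp⟩ := Function.ne_iff.1 hv0
  obtain ⟨i, -, hmax⟩ := Finset.exists_max_image Finset.univ f ⟨p.1, Finset.mem_univ _⟩
  have hfp : 0 < f p.1 := by
    rw [hf]
    simp only [norm_pos_iff]
    intro hz
    apply hp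
    have := congrFun (congrArg (WithLp.equiv 2 (Fin (k p.1) → ℂ)) hz) p.2
    simpa [hx, Sigma.eta] using this
  have hfi : 0 < f i := lt_of_lt_of_le hfp (hmax p.1 (Finset.mem_univ _))
  refine ⟨i, ?_⟩
  by_cases hspec : lam ∈ spectrum ℂ ((blk A i i).map (algebraMap ℝ ℂ))
  · exact Or.inl hspec
  right
  set blkc : ∀ j, Matrix (Fin (k i)) (Fin (k j)) ℂ := fun j => (blk A i j).map (algebraMap ℝ ℂ)
  set B : Matrix (Fin (k i)) (Fin (k i)) ℂ :=
    lam • (1 : Matrix (Fin (k i)) (Fin (k i)) ℂ) - blkc i with hB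
  have hU : IsUnit B := by
    rw [spectrum.notMem_iff] at hspec
    rw [Algebra.algebraMap_eq_smul_one] at hspec
    exact hspec
  have hBinv : B⁻¹ * B = 1 := Matrix.nonsing_inv_mul B ((Matrix.isUnit_iff_isUnit_det B).1 hU)
  -- block equation
  have hcomp : ∀ a : Fin (k i), (B *ᵥ x i) a
      = (∑ j ∈ Finset.univ.erase i, (blkc j *ᵥ x j)) a := by
    intro a
    have h0 := congrFun hv ⟨i, a⟩
    have hsum : ((A.map (algebraMap ℝ ℂ)) *ᵥ v) ⟨i, a⟩ = ∑ j, (blkc j *ᵥ x j) a := by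
      show ∑ q : ((i : Fin n) × Fin (k i)), (A.map (algebraMap ℝ ℂ)) ⟨i, a⟩ q * v q = _
      rw [← Finset.univ_sigma_univ, Finset.sum_sigma]
      rfl
    have h1 : lam * x i a = ∑ j, (blkc j *ᵥ x j) a := by
      rw [← hsum]
      have : ((lam • (1 : Matrix ((i : Fin n) × Fin (k i)) ((i : Fin n) × Fin (k i)) ℂ)
          - A.map (algebraMap ℝ ℂ)) *ᵥ v) ⟨i, a⟩ = 0 := by rw [hv]; rfl
      rw [Matrix.sub_mulVec, Matrix.smul_mulVec, Matrix.one_mulVec] at this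
      have := sub_eq_zero.1 this
      simpa using this
    have h2 : (B *ᵥ x i) a = lam * x i a - (blkc i *ᵥ x i) a := by
      rw [hB, Matrix.sub_mulVec, Matrix.smul_mulVec, Matrix.one_mulVec]
      rfl
    rw [h2, h1, Finset.sum_apply]
    rw [← Finset.sum_erase_add Finset.univ _ (Finset.mem_univ i)]
    ring
  have hblockeq : B *ᵥ x i = ∑ j ∈ Finset.univ.erase i, (blkc j *ᵥ x j) := funext hcomp
  -- recover x i
  have hxi : x i = B⁻¹ *ᵥ (∑ j ∈ Finset.univ.erase i, (blkc j *ᵥ x j)) := by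
    rw [← hblockeq, Matrix.mulVec_mulVec, hBinv, Matrix.one_mulVec]
  -- norm estimates
  set N : ℝ := specNorm B⁻¹ with hNdef
  set T : ℝ := ∑ j ∈ Finset.univ.erase i, specNormR (blk A i j) with hT
  have hT0 : 0 ≤ T := Finset.sum_nonneg fun j _ => specNormR_nonneg _
  have key : f i ≤ N * (T * f i) := by
    calc f i = ‖(WithLp.equiv 2 (Fin (k i) → ℂ)).symm
          (B⁻¹ *ᵥ (∑ j ∈ Finset.univ.erase i, (blkc j *ᵥ x j)))‖ := by rw [hf]; rw [← hxi]
      _ ≤ N * ‖(WithLp.equiv 2 (Fin (k i) → ℂ)).symm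
          (∑ j ∈ Finset.univ.erase i, (blkc j *ᵥ x j))‖ := norm_mulVec_le _ _
      _ ≤ N * (T * f i) := by
          apply mul_le_mul_of_nonneg_left _ (norm_nonneg _)
          have hsymm : (WithLp.equiv 2 (Fin (k i) → ℂ)).symm
              (∑ j ∈ Finset.univ.erase i, (blkc j *ᵥ x j))
              = ∑ j ∈ Finset.univ.erase i,
                (WithLp.equiv 2 (Fin (k i) → ℂ)).symm (blkc j *ᵥ x j) := WithLp.toLp_sum _ _ _ _
          rw [hsymm]
          calc ‖∑ j ∈ Finset.univ.erase i,
                (WithLp.equiv 2 (Fin (k i) → ℂ)).symm (blkc j *ᵥ x j)‖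
              ≤ ∑ j ∈ Finset.univ.erase i,
                ‖(WithLp.equiv 2 (Fin (k i) → ℂ)).symm (blkc j *ᵥ x j)‖ :=
                norm_sum_le _ _
            _ ≤ ∑ j ∈ Finset.univ.erase i, specNormR (blk A i j) * f i := by
                apply Finset.sum_le_sum
                intro j _
                calc ‖(WithLp.equiv 2 (Fin (k i) → ℂ)).symm (blkc j *ᵥ x j)‖
                    ≤ specNorm (blkc j) * f j := norm_mulVec_le _ _
                  _ ≤ specNormR (blk A i j) * f i :=
                      mul_le_mul (specNorm_map_le _) (hmax j (Finset.mem_univ _))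
                        (norm_nonneg _) (specNormR_nonneg _)
            _ = T * f i := by rw [hT, Finset.sum_mul]
  have hone : 1 ≤ N * T := by
    have := key
    rw [show N * (T * f i) = (N * T) * f i by ring] at this
    nlinarith [hfi]
  have hN0 : 0 < N := by
    by_contra h
    push_neg at h
    have : N = 0 := le_antisymm h (norm_nonneg _)
    rw [this] at hone; linarith
  calc N⁻¹ = N⁻¹ * 1 := by ring
    _ ≤ N⁻¹ * (N * T) := by
        apply mul_le_mul_of_nonneg_left hone (by positivity)
    _ = T := by field_simp
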